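/- If α₁,…,αₙ ∈ ℂ are linearly independent over ℚ, then the set of n-tuples ({Re(X·α₁)}, …, {Re(X·αₙ)}) for X ranging over ℂ is dense in the torus [0,1)ⁿ, where {x} denotes the fractional part of x. -/

import Mathlib

open Module Submodule Filter Topology

lemma line_lemma {E : Type*} [NormedAddCommGroup E] [NormedSpace ℝ E] [FiniteDimensional ℝ E]
    (H : AddSubgroup E) (hc : IsClosed (H : Set E))
    (hsmall : ∀ ε : ℝ, 0 < ε → ∃ x ∈ H, x ≠ 0 ∧ ‖x‖ < ε) :
    ∃ u : E, u ≠ 0 ∧ ∀ t : ℝ, t • u ∈ H := by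
  choose x hxH hx0 hxn using fun k : ℕ => hsmall (1 / (k + 1)) (by positivity)
  have hcpos : ∀ k, (0 : ℝ) < ‖x k‖ := fun k => norm_pos_iff.mpr (hx0 k)
  set v : ℕ → E := fun k => ‖x k‖⁻¹ • x k with hv
  have hvs : ∀ k, v k ∈ Metric.sphere (0 : E) 1 := by
    intro k
    simp [hv, norm_smul, abs_of_pos (inv_pos.mpr (hcpos k)),
      inv_mul_cancel₀ (hcpos k).ne']
  obtain ⟨u, hus, φ, hφ, hconv⟩ :=
    (isCompact_sphere (0 : E) 1).tendsto_subseq hvs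
  refine ⟨u, ?_, ?_⟩
  · intro h
    rw [h] at hus
    simpa using hus
  intro t
  -- y k := ⌊t / ‖x (φ k)‖⌋ • x (φ k)  ∈ H, tends to t • u
  set c : ℕ → ℝ := fun k => ‖x (φ k)‖ with hcdef
  have hcpos' : ∀ k, 0 < c k := fun k => hcpos _
  set s : ℕ → ℝ := fun k => (⌊t / c k⌋ : ℝ) * c k with hs
  have hsc : Tendsto s atTop (𝓝 t) := by
    rw [tendsto_iff_dist_tendsto_zero]
    have hb : ∀ k, dist (s k) t ≤ 1 / (k + 1) := by
      intro k
      have hst : s k - t = ((⌊t / c k⌋ : ℝ) - t / c k) * c k := by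
        simp only [hs]
        rw [sub_mul, div_mul_cancel₀ _ (hcpos' k).ne']
      have h1 : dist (s k) t = |(⌊t / c k⌋ : ℝ) - t / c k| * c k := by
        rw [Real.dist_eq, hst, abs_mul, abs_of_pos (hcpos' k)]
      have h2 : |(⌊t / c k⌋ : ℝ) - t / c k| ≤ 1 := by
        rw [abs_sub_comm, abs_of_nonneg (Int.fract_nonneg _)]
        exact (Int.fract_lt_one _).le
      calc dist (s k) t ≤ 1 * c k := h1 ▸ mul_le_mul_of_nonneg_right h2 (hcpos' k).le
        _ = c k := one_mul _
        _ ≤ 1 / (φ k + 1) := (hxn (φ k)).le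
        _ ≤ 1 / (k + 1) := by
            apply one_div_le_one_div_of_le (by positivity)
            have hk : k ≤ φ k := hφ.le_apply
            have : (k : ℝ) ≤ φ k := Nat.cast_le.mpr hk
            linarith
    exact squeeze_zero (fun k => dist_nonneg) hb tendsto_one_div_add_atTop_nhds_zero_nat
  have hy : Tendsto (fun k => s k • (v (φ k))) atTop (𝓝 (t • u)) := hsc.smul hconv
  have hyH : ∀ k, s k • (v (φ k)) ∈ H := by
    intro k
    have : s k • v (φ k) = ⌊t / c k⌋ • x (φ k) := by
      simp only [hs, hv, hcdef]
      rw [smul_smul, mul_assoc, mul_inv_cancel₀ (hcpos (φ k)).ne', mul_one,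
        Int.cast_smul_eq_zsmul]
    rw [this]
    exact zsmul_mem (hxH _) _
  exact hc.mem_of_tendsto hy (Filter.Eventually.of_forall hyH)

lemma main_lemma (n : ℕ) : ∀ (E : Type) [NormedAddCommGroup E] [NormedSpace ℝ E]
    [FiniteDimensional ℝ E], finrank ℝ E = n →
    ∀ (H : AddSubgroup E), IsClosed (H : Set E) → H ≠ ⊤ →
    ∃ f : E →ₗ[ℝ] ℝ, f ≠ 0 ∧ ∀ x ∈ H, ∃ z : ℤ, f x = z := by
  induction n using Nat.strong_induction_on with
  | _ n IH =>
    intro E _ _ _ hrank H hc hne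
    have hnt : Nontrivial E := by
      obtain ⟨x, hx⟩ : ∃ x, x ∉ H := by
        by_contra hcon; push_neg at hcon
        exact hne ((AddSubgroup.eq_top_iff' H).mpr hcon)
      exact nontrivial_of_ne x 0 (fun h => hx (h ▸ H.zero_mem))
    by_cases hd : DiscreteTopology H
    · -- discrete case
      set L : Submodule ℤ E := AddSubgroup.toIntSubmodule H with hL
      have hdL : DiscreteTopology L := hd
      by_cases hspan : span ℝ (L : Set E) = ⊤
      · haveI : IsZLattice ℝ L := ⟨hspan⟩
        let b := Module.Free.chooseBasis ℤ L
        let b' : Basis (Module.Free.ChooseBasisIndex ℤ L) ℝ E := Basis.ofZLatticeBasis ℝ L b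
        haveI : Nonempty (Module.Free.ChooseBasisIndex ℤ L) := b'.index_nonempty
        obtain ⟨i⟩ := (inferInstance : Nonempty (Module.Free.ChooseBasisIndex ℤ L))
        refine ⟨b'.coord i, ?_, ?_⟩
        · intro h0
          have : b'.coord i (b' i) = 0 := by rw [h0]; rfl
          rw [Basis.coord_apply, Basis.repr_self] at this
          simp at this
        · intro x hx
          have hxL : x ∈ span ℤ (Set.range b') := by
            rw [Basis.ofZLatticeBasis_span]; exact hx
          rw [Basis.mem_span_iff_repr_mem] at hxL
          obtain ⟨z, hz⟩ := hxL i
          exact ⟨z, by rw [Basis.coord_apply, ← hz]; rfl⟩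
      · obtain ⟨f, hf0, hfmap⟩ := Submodule.exists_dual_map_eq_bot_of_lt_top
          (lt_top_iff_ne_top.mpr hspan) inferInstance
        refine ⟨f, hf0, fun x hx => ⟨0, ?_⟩⟩
        have : f x ∈ Submodule.map f (span ℝ (L : Set E)) :=
          ⟨x, subset_span hx, rfl⟩
        rw [hfmap] at this
        simpa using this
    · -- non-discrete case
      have hsmall : ∀ ε : ℝ, 0 < ε → ∃ x ∈ H, x ≠ 0 ∧ ‖x‖ < ε := by
        by_contra hcon; push_neg at hcon
        obtain ⟨ε, hε, hcon⟩ := hcon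
        apply hd
        rw [discreteTopology_iff_isOpen_singleton_zero, isOpen_induced_iff]
        refine ⟨Metric.ball 0 ε, Metric.isOpen_ball, ?_⟩
        ext ⟨y, hy⟩
        simp only [Set.mem_preimage, Metric.mem_ball, dist_zero_right, Set.mem_singleton_iff]
        constructor
        · intro hlt
          have hy0 : y = 0 := by
            by_contra h0
            exact absurd hlt (not_lt.mpr (hcon y hy h0))
          exact Subtype.ext hy0
        · intro h0
          have hy0 : y = 0 := congrArg Subtype.val h0
          simpa [hy0] using hε
      obtain ⟨u, hu0, huH⟩ := line_lemma H hc hsmall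
      set S : Submodule ℝ E := span ℝ {u} with hS
      haveI hScl : IsClosed (S : Set E) := Submodule.closed_of_finiteDimensional S
      have hrankQ : finrank ℝ (E ⧸ S) < n := by
        have h1 : finrank ℝ (E ⧸ S) + finrank ℝ S = finrank ℝ E :=
          Submodule.finrank_quotient_add_finrank S
        have h2 : finrank ℝ S = 1 := finrank_span_singleton hu0
        omega
      set π : E →ₗ[ℝ] E ⧸ S := S.mkQ with hπ
      set H' : AddSubgroup (E ⧸ S) :=
        (H.map (π.toAddMonoidHom)).topologicalClosure with hH'
      have hH'ne : H' ≠ ⊤ := by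
        intro htop
        apply hne
        have hdense : Dense ((H.map (π.toAddMonoidHom) : Set (E ⧸ S))) := by
          have hcoe := congrArg (fun G : AddSubgroup (E ⧸ S) => (G : Set (E ⧸ S))) htop
          simp only [hH', AddSubgroup.topologicalClosure_coe, AddSubgroup.coe_top] at hcoe
          rw [dense_iff_closure_eq, hcoe]
        rw [AddSubgroup.eq_top_iff']
        intro x
        have hxcl : x ∈ closure (H : Set E) := by
          rw [Metric.mem_closure_iff]
          intro ε hε
          have hπx : π x ∈ closure ((H.map (π.toAddMonoidHom) : Set (E ⧸ S))) :=
            hdense _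
          rw [Metric.mem_closure_iff] at hπx
          obtain ⟨y, hy, hdy⟩ := hπx (ε / 2) (by positivity)
          obtain ⟨h₀, hh₀, rfl⟩ := hy
          have hnorm : ‖π x - π h₀‖ < ε / 2 := by
            rwa [← dist_eq_norm]
          have hmk : π x - π h₀ = Submodule.Quotient.mk (x - h₀) := by
            simp [hπ, Submodule.mkQ_apply, Submodule.Quotient.mk_sub]
          obtain ⟨m, hm, hmlt⟩ := Submodule.Quotient.norm_mk_lt
            (Submodule.Quotient.mk (x - h₀) : E ⧸ S) (show (0:ℝ) < ε / 2 by positivity)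
          have hml : ‖m‖ < ε := by
            rw [← hmk] at hmlt
            linarith
          have hker : x - h₀ - m ∈ S := by
            rw [← Submodule.Quotient.mk_eq_zero, Submodule.Quotient.mk_sub, hm, ← hmk]
            abel
          obtain ⟨t, ht⟩ := Submodule.mem_span_singleton.mp (hS ▸ hker)
          refine ⟨h₀ + (x - h₀ - m), H.add_mem hh₀ (ht ▸ huH t), ?_⟩
          have : x - (h₀ + (x - h₀ - m)) = m := by abel
          rw [dist_eq_norm, this]
          exact hml
        rwa [hc.closure_eq] at hxcl
      have hH'c : IsClosed (H' : Set (E ⧸ S)) := AddSubgroup.isClosed_topologicalClosure _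
      obtain ⟨f', hf'0, hf'⟩ := IH _ hrankQ (E ⧸ S) rfl H' hH'c hH'ne
      refine ⟨f'.comp π, ?_, ?_⟩
      · intro h0
        apply hf'0
        apply LinearMap.ext
        intro q
        obtain ⟨y, rfl⟩ := S.mkQ_surjective q
        have := congrArg (fun g : E →ₗ[ℝ] ℝ => g y) h0
        simpa [hπ] using this
      · intro y hy
        exact hf' _ (AddSubgroup.le_topologicalClosure _
          (AddSubgroup.mem_map_of_mem _ hy))

theorem stmt_2 (n : ℕ) (α : Fin n → ℂ)
    (hind : ∀ l : Fin n → ℤ, (∑ i, (l i : ℂ) * α i) = 0 → l = 0) :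
    ∀ (β : Fin n → ℝ) (ε : ℝ), 0 < ε →
      ∃ (X : ℂ) (m : Fin n → ℤ), ∀ k : Fin n,
        |(X * α k).re - (m k : ℝ) - β k| < ε := by
  intro β ε hε
  set a : Fin n → ℝ := fun k => (α k).re with ha
  set b : Fin n → ℝ := fun k => (α k).im with hb
  set V : Submodule ℝ (Fin n → ℝ) := span ℝ {a, b} with hV
  set W : AddSubgroup (Fin n → ℝ) :=
    (span ℤ (Set.range (Pi.basisFun ℝ (Fin n)))).toAddSubgroup with hW
  set G : AddSubgroup (Fin n → ℝ) := (V.toAddSubgroup ⊔ W).topologicalClosure with hG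
  have hVG : ∀ v ∈ V, v ∈ G := fun v hv =>
    AddSubgroup.le_topologicalClosure _ (AddSubgroup.mem_sup_left hv)
  have hWG : ∀ w ∈ W, w ∈ G := fun w hw =>
    AddSubgroup.le_topologicalClosure _ (AddSubgroup.mem_sup_right hw)
  have hGtop : G = ⊤ := by
    by_contra hne
    obtain ⟨f, hf0, hf⟩ := main_lemma (finrank ℝ (Fin n → ℝ)) (Fin n → ℝ) rfl G
      (AddSubgroup.isClosed_topologicalClosure _) hne
    -- f vanishes on V
    have hfV : ∀ v ∈ V, f v = 0 := by
      intro v hv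
      by_contra h0
      obtain ⟨z, hz⟩ := hf ((1 / (2 * f v)) • v) (hVG _ (V.smul_mem _ hv))
      rw [map_smul, smul_eq_mul] at hz
      have h12 : (1 : ℝ) / 2 = z := by
        rw [← hz]; field_simp
      have h2 : (2 : ℝ) * (z : ℝ) = 1 := by rw [← h12]; ring
      have h3 : (2 * z : ℤ) = 1 := by exact_mod_cast h2
      omega
    -- f is integer valued on the standard basis
    have hek : ∀ k, Pi.basisFun ℝ (Fin n) k ∈ W :=
      fun k => subset_span (Set.mem_range_self k)
    choose l hl using fun k => hf _ (hWG _ (hek k))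
    -- f applied to any vector
    have hfx : ∀ x : Fin n → ℝ, f x = ∑ k, x k * (l k : ℝ) := by
      intro x
      have hx : x = ∑ k, x k • Pi.basisFun ℝ (Fin n) k := by
        funext j
        simp [Pi.basisFun_apply, Finset.sum_apply, Pi.single_apply]
      conv_lhs => rw [hx]
      rw [map_sum]
      exact Finset.sum_congr rfl fun k _ => by rw [map_smul, smul_eq_mul, hl k]
    have hsum : ∑ i, ((l i : ℂ)) * α i = 0 := by
      apply Complex.ext
      · rw [Complex.re_sum, Complex.zero_re]
        have : ∀ i, ((l i : ℂ) * α i).re = a i * (l i : ℝ) := by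
          intro i
          simp [Complex.mul_re, ha, mul_comm]
        rw [Finset.sum_congr rfl fun i _ => this i, ← hfx a]
        exact hfV a (subset_span (Set.mem_insert _ _))
      · rw [Complex.im_sum, Complex.zero_im]
        have : ∀ i, ((l i : ℂ) * α i).im = b i * (l i : ℝ) := by
          intro i
          simp [Complex.mul_im, hb, mul_comm]
        rw [Finset.sum_congr rfl fun i _ => this i, ← hfx b]
        exact hfV b (subset_span (Set.mem_insert_of_mem _ rfl))
    have hl0 := hind l hsum
    apply hf0
    apply LinearMap.ext
    intro x
    rw [hfx x]
    simp [hl0]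
  -- now β is in the closure
  have hβ : β ∈ closure ((V.toAddSubgroup ⊔ W : AddSubgroup (Fin n → ℝ)) : Set (Fin n → ℝ)) := by
    have h1 : β ∈ G := hGtop ▸ AddSubgroup.mem_top β
    rw [hG] at h1
    exact h1
  rw [Metric.mem_closure_iff] at hβ
  obtain ⟨y, hy, hdy⟩ := hβ ε hε
  obtain ⟨v, hv, w, hw, rfl⟩ := AddSubgroup.mem_sup.mp hy
  obtain ⟨s, t, hst⟩ := Submodule.mem_span_pair.mp hv
  -- integer coordinates of w
  have hwz : ∀ k, ∃ z : ℤ, (z : ℝ) = w k := by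
    intro k
    obtain ⟨z, hz⟩ := (Basis.mem_span_iff_repr_mem ℤ (Pi.basisFun ℝ (Fin n)) w).mp hw k
    refine ⟨z, ?_⟩
    rw [Pi.basisFun_repr] at hz
    exact_mod_cast hz
  choose m hm using hwz
  refine ⟨(s : ℂ) - (t : ℂ) * Complex.I, fun k => -(m k), ?_⟩
  intro k
  have hre : (((s : ℂ) - (t : ℂ) * Complex.I) * α k).re = s * a k + t * b k := by
    simp only [Complex.sub_re, Complex.mul_re, Complex.sub_im, Complex.mul_im,
      Complex.ofReal_re, Complex.ofReal_im, Complex.I_re, Complex.I_im]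
    ring
  have hdk : dist (β k) ((v + w) k) < ε := by
    exact (dist_pi_lt_iff hε).mp hdy k
  have hvk : v k = s * a k + t * b k := by
    rw [← hst]
    simp [Pi.add_apply, Pi.smul_apply, smul_eq_mul]
  rw [hre]
  have : s * a k + t * b k - (((-(m k) : ℤ) : ℝ)) - β k = (v + w) k - β k := by
    push_cast
    rw [Pi.add_apply, hvk, ← hm k]
    ring
  rw [this]
  rw [Real.dist_eq, abs_sub_comm] at hdk
  exact hdk
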